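/- For n ∈ ℕ and integer 0 ≤ k ≤ n define f(k) := −(2k−n)⁴/(12n²) + (2k−n)²/(2n) − 1/4, g(k) := (2k−n)⁸/(288n⁴) − 3(2k−n)⁶/(40n³) + 19(2k−n)⁴/(48n²) − 11(2k−n)²/(24n) + 1/32, and T̃(k) := (1/2)·ln(πn/2) + (k − n/2)²/(n/2) − f(k)/n + ( −g(k) + f(k)²/2 )/n². Then there exist constants C > 0 and N such that for all n ≥ N, | Σ_{k=0}^{n} (C(n,k)/2^n)·T̃(k) − ( (1/2)·ln(π e n / 2) − 1/(12 n²) ) | ≤ C / n³. -/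

import Mathlib

/-- First-order Stirling correction polynomial `f(k)`. -/
noncomputable def fcorr (n k : ℕ) : ℝ :=
  -((2 * (k : ℝ) - n) ^ 4) / (12 * (n : ℝ) ^ 2)
    + (2 * (k : ℝ) - n) ^ 2 / (2 * (n : ℝ)) - 1 / 4

/-- Second-order Stirling correction polynomial `g(k)`. -/
noncomputable def gcorr (n k : ℕ) : ℝ :=
  (2 * (k : ℝ) - n) ^ 8 / (288 * (n : ℝ) ^ 4)
    - 3 * (2 * (k : ℝ) - n) ^ 6 / (40 * (n : ℝ) ^ 3)
    + 19 * (2 * (k : ℝ) - n) ^ 4 / (48 * (n : ℝ) ^ 2)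
    - 11 * (2 * (k : ℝ) - n) ^ 2 / (24 * (n : ℝ)) + 1 / 32

/-- Truncated Taylor expansion `T̃(k)` of the approximate self-information. -/
noncomputable def Ttilde (n k : ℕ) : ℝ :=
  (1 / 2) * Real.log (Real.pi * n / 2) + ((k : ℝ) - n / 2) ^ 2 / ((n : ℝ) / 2)
    - fcorr n k / n + (-gcorr n k + (fcorr n k) ^ 2 / 2) / (n : ℝ) ^ 2

lemma pascal_step (h : ℝ → ℝ) (n : ℕ) :
    ∑ k ∈ Finset.range (n + 2), (((n + 1).choose k : ℕ) : ℝ) * h (2 * (k : ℝ) - ((n : ℝ) + 1))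
    = ∑ k ∈ Finset.range (n + 1), ((n.choose k : ℕ) : ℝ) *
        (h (2 * (k : ℝ) - (n : ℝ) - 1) + h (2 * (k : ℝ) - (n : ℝ) + 1)) := by
  have hA :
      ∑ k ∈ Finset.range (n + 2), ((n.choose k : ℕ) : ℝ) * h (2 * (k : ℝ) - (n : ℝ) - 1)
      = ∑ k ∈ Finset.range (n + 1), ((n.choose k : ℕ) : ℝ) * h (2 * (k : ℝ) - (n : ℝ) - 1) := by
    rw [Finset.sum_range_succ]
    simp [Nat.choose_succ_self]
  rw [Finset.sum_range_succ' _ (n + 1)] at hA ⊢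
  have e1 : ∀ x : ℕ, 2 * (x : ℝ) + 2 * 1 - ((n : ℝ) + 1) = 2 * (x : ℝ) - (n : ℝ) + 1 := by
    intro x; ring
  have e2 : ∀ x : ℕ, 2 * (x : ℝ) + 2 * 1 - (n : ℝ) - 1 = 2 * (x : ℝ) - (n : ℝ) + 1 := by
    intro x; ring
  have e3 : 2 * (0 : ℝ) - ((n : ℝ) + 1) = 2 * (0 : ℝ) - (n : ℝ) - 1 := by ring
  simp only [Nat.choose_succ_succ, Nat.succ_eq_add_one, Nat.cast_add, Nat.cast_zero,
    Nat.choose_zero_right, Nat.cast_one, add_mul, Finset.sum_add_distrib, Nat.cast_succ,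
    mul_add, e1, e2, e3] at hA ⊢
  linarith [hA]

noncomputable def cmom (j n : ℕ) : ℝ :=
  ∑ k ∈ Finset.range (n + 1), ((n.choose k : ℕ) : ℝ) * (2 * (k : ℝ) - (n : ℝ)) ^ j

lemma cmom_succ (j n : ℕ) :
    cmom j (n + 1) = ∑ k ∈ Finset.range (n + 1), ((n.choose k : ℕ) : ℝ) *
      ((2 * (k : ℝ) - (n : ℝ) - 1) ^ j + (2 * (k : ℝ) - (n : ℝ) + 1) ^ j) := by
  have := pascal_step (fun x => x ^ j) n
  simpa [cmom] using this

lemma cmom_zero (n : ℕ) : cmom 0 n = 2 ^ n := by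
  unfold cmom
  simp only [pow_zero, mul_one]
  exact_mod_cast Nat.sum_range_choose n

lemma cmom_two (n : ℕ) : cmom 2 n = n * 2 ^ n := by
  induction n with
  | zero => simp [cmom]
  | succ n ih =>
    rw [cmom_succ]
    have e : ∀ k ∈ Finset.range (n + 1), ((n.choose k : ℕ) : ℝ) *
        ((2 * (k : ℝ) - (n : ℝ) - 1) ^ 2 + (2 * (k : ℝ) - (n : ℝ) + 1) ^ 2)
        = 2 * (((n.choose k : ℕ) : ℝ) * (2 * (k : ℝ) - (n : ℝ)) ^ 2)
          + 2 * (((n.choose k : ℕ) : ℝ) * (2 * (k : ℝ) - (n : ℝ)) ^ 0) := by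
      intro k _; ring
    rw [Finset.sum_congr rfl e, Finset.sum_add_distrib, ← Finset.mul_sum, ← Finset.mul_sum,
      ← cmom, ← cmom, ih, cmom_zero]
    push_cast
    ring

lemma cmom_four (n : ℕ) : cmom 4 n = (3 * (n:ℝ) ^ 2 - 2 * n) * 2 ^ n := by
  induction n with
  | zero => simp [cmom]
  | succ n ih =>
    rw [cmom_succ]
    have e : ∀ k ∈ Finset.range (n + 1), ((n.choose k : ℕ) : ℝ) *
        ((2 * (k : ℝ) - (n : ℝ) - 1) ^ 4 + (2 * (k : ℝ) - (n : ℝ) + 1) ^ 4)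
        = 2 * (((n.choose k : ℕ) : ℝ) * (2 * (k : ℝ) - (n : ℝ)) ^ 4)
          + 12 * (((n.choose k : ℕ) : ℝ) * (2 * (k : ℝ) - (n : ℝ)) ^ 2)
          + 2 * (((n.choose k : ℕ) : ℝ) * (2 * (k : ℝ) - (n : ℝ)) ^ 0) := by
      intro k _; ring
    rw [Finset.sum_congr rfl e, Finset.sum_add_distrib, Finset.sum_add_distrib,
      ← Finset.mul_sum, ← Finset.mul_sum, ← Finset.mul_sum,
      ← cmom, ← cmom, ← cmom, ih, cmom_zero, cmom_two]
    push_cast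
    ring

lemma cmom_six (n : ℕ) : cmom 6 n = (15 * (n:ℝ) ^ 3 - 30 * (n:ℝ) ^ 2 + 16 * n) * 2 ^ n := by
  induction n with
  | zero => simp [cmom]
  | succ n ih =>
    rw [cmom_succ]
    have e : ∀ k ∈ Finset.range (n + 1), ((n.choose k : ℕ) : ℝ) *
        ((2 * (k : ℝ) - (n : ℝ) - 1) ^ 6 + (2 * (k : ℝ) - (n : ℝ) + 1) ^ 6)
        = 2 * (((n.choose k : ℕ) : ℝ) * (2 * (k : ℝ) - (n : ℝ)) ^ 6)
          + 30 * (((n.choose k : ℕ) : ℝ) * (2 * (k : ℝ) - (n : ℝ)) ^ 4)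
          + 30 * (((n.choose k : ℕ) : ℝ) * (2 * (k : ℝ) - (n : ℝ)) ^ 2)
          + 2 * (((n.choose k : ℕ) : ℝ) * (2 * (k : ℝ) - (n : ℝ)) ^ 0) := by
      intro k _; ring
    rw [Finset.sum_congr rfl e, Finset.sum_add_distrib, Finset.sum_add_distrib,
      Finset.sum_add_distrib, ← Finset.mul_sum, ← Finset.mul_sum, ← Finset.mul_sum,
      ← Finset.mul_sum, ← cmom, ← cmom, ← cmom, ← cmom, ih, cmom_zero, cmom_two, cmom_four]
    push_cast
    ring



/-- Expectation of `T̃` under the `Binomial(n, 1/2)` distribution: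
`E[T̃(X)] = (1/2)·ln(πen/2) − 1/(12n²) + O(1/n³)`. -/
theorem binomial_expected_Ttilde_expansion :
    ∃ C : ℝ, 0 < C ∧ ∃ N : ℕ, ∀ n : ℕ, N ≤ n →
      |(∑ k ∈ Finset.range (n + 1), ((n.choose k : ℝ) / 2 ^ n) * Ttilde n k)
          - ((1 / 2) * Real.log (Real.pi * Real.exp 1 * n / 2)
              - 1 / (12 * (n : ℝ) ^ 2))|
        ≤ C / (n : ℝ) ^ 3 := by
  refine ⟨2, by norm_num, 1, fun n hn => ?_⟩
  have hn1 : (1 : ℝ) ≤ (n : ℝ) := by exact_mod_cast hn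
  have hn0 : (n : ℝ) ≠ 0 := by positivity
  have hnp : (0 : ℝ) < n := by linarith
  set L : ℝ := (1 / 2) * Real.log (Real.pi * n / 2) with hL
  -- pointwise expansion of Ttilde
  have hT : ∀ k : ℕ, ((n.choose k : ℕ) : ℝ) * Ttilde n k
      = L * (((n.choose k : ℕ) : ℝ) * (2 * (k : ℝ) - (n : ℝ)) ^ 0)
        + (1 / (30 * (n : ℝ) ^ 5)) * (((n.choose k : ℕ) : ℝ) * (2 * (k : ℝ) - (n : ℝ)) ^ 6)
        + (1 / (12 * (n : ℝ) ^ 3) - 1 / (4 * (n : ℝ) ^ 4))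
            * (((n.choose k : ℕ) : ℝ) * (2 * (k : ℝ) - (n : ℝ)) ^ 4)
        + (1 / (2 * (n : ℝ)) - 1 / (2 * (n : ℝ) ^ 2) + 1 / (3 * (n : ℝ) ^ 3))
            * (((n.choose k : ℕ) : ℝ) * (2 * (k : ℝ) - (n : ℝ)) ^ 2)
        + (1 / (4 * (n : ℝ))) * (((n.choose k : ℕ) : ℝ) * (2 * (k : ℝ) - (n : ℝ)) ^ 0) := by
    intro k
    unfold Ttilde fcorr gcorr
    rw [← hL]
    field_simp
    ring
  have hsum : ∑ k ∈ Finset.range (n + 1), ((n.choose k : ℝ) / 2 ^ n) * Ttilde n k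
      = (L * cmom 0 n + (1 / (30 * (n : ℝ) ^ 5)) * cmom 6 n
          + (1 / (12 * (n : ℝ) ^ 3) - 1 / (4 * (n : ℝ) ^ 4)) * cmom 4 n
          + (1 / (2 * (n : ℝ)) - 1 / (2 * (n : ℝ) ^ 2) + 1 / (3 * (n : ℝ) ^ 3)) * cmom 2 n
          + (1 / (4 * (n : ℝ))) * cmom 0 n) / 2 ^ n := by
    have h1 : ∀ k ∈ Finset.range (n + 1), ((n.choose k : ℝ) / 2 ^ n) * Ttilde n k
        = (((n.choose k : ℕ) : ℝ) * Ttilde n k) / 2 ^ n := by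
      intro k _; push_cast; ring
    rw [Finset.sum_congr rfl h1, ← Finset.sum_div]
    congr 1
    unfold cmom
    simp only [hT, Finset.sum_add_distrib, Finset.mul_sum]
  have hlog : Real.log (Real.pi * Real.exp 1 * n / 2) = Real.log (Real.pi * n / 2) + 1 := by
    have e : Real.pi * Real.exp 1 * n / 2 = (Real.pi * n / 2) * Real.exp 1 := by ring
    rw [e, Real.log_mul (by positivity) (Real.exp_ne_zero 1), Real.log_exp]
  have h2p : (0 : ℝ) < 2 ^ n := by positivity
  calc |(∑ k ∈ Finset.range (n + 1), ((n.choose k : ℝ) / 2 ^ n) * Ttilde n k)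
          - ((1 / 2) * Real.log (Real.pi * Real.exp 1 * n / 2) - 1 / (12 * (n : ℝ) ^ 2))|
      = |(16 - 15 * (n : ℝ)) / (30 * (n : ℝ) ^ 4)| := by
        rw [hsum, cmom_zero, cmom_two, cmom_four, cmom_six, hlog, hL]
        congr 1
        field_simp
        ring
    _ ≤ 2 / (n : ℝ) ^ 3 := by
        have habs : |16 - 15 * (n : ℝ)| ≤ 60 * n := by
          rw [abs_le]; constructor <;> nlinarith
        rw [abs_div, abs_of_pos (by positivity : (0:ℝ) < 30 * (n : ℝ) ^ 4),
          div_le_div_iff₀ (by positivity) (by positivity)]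
        nlinarith [mul_le_mul_of_nonneg_right habs (pow_nonneg (le_of_lt hnp) 3),
          pow_pos hnp 3, pow_pos hnp 4]
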